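/- Let V be a finite set and let X, Y, X′, Y′ be subsets of V that cover V and are pairwise disjoint except for X ∩ X′ = {s}. Let A be the symmetric integer matrix indexed by V which agrees with the F-matrix F[X,Y] on entries with both indices in X ∪ Y, agrees with the F-matrix F[X′,Y′] on entries with both indices in X′ ∪ Y′, and is 0 on all entries with one index in (X ∪ Y) ∖ {s} and the other in (X′ ∪ Y′) ∖ {s}. Then for every r ∈ Y, the matrix T_{s,r}A is the matrix built in exactly the same way from the four sets X, Y ∖ {r}, X′ ∪ {r}, Y′ (which again are pairwise disjoint except for X ∩ (X′ ∪ {r}) = {s}). -/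

import Mathlib

open Matrix

/-- `M_{s,r}^σ = I + σ·e_s·e_rᵀ`. -/
def Msr {V : Type*} [Fintype V] [DecidableEq V] (σ : ℤ) (s r : V) : Matrix V V ℤ :=
  1 + Matrix.single s r σ

/-- `T_{s,r} A = (M_{s,r}^{-A_{s,r}})ᵀ · A · M_{s,r}^{-A_{s,r}}`. -/
def Tsr {V : Type*} [Fintype V] [DecidableEq V] (s r : V) (A : Matrix V V ℤ) : Matrix V V ℤ :=
  (Msr (-(A s r)) s r)ᵀ * A * Msr (-(A s r)) s r

/-- The matrix indexed by `V` that agrees with the F-matrix `F[X,Y]` on entries with both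
indices in `X ∪ Y`, agrees with the F-matrix `F[X',Y']` on entries with both indices in
`X' ∪ Y'`, and is `0` on all remaining (mixed) off-diagonal entries.  (Recall that the
F-matrix `F[X,Y]` has diagonal entries `2`, entry `+1` between two distinct vertices in the
same part, and entry `-1` between two vertices in different parts.) -/
def glueF {V : Type*} [DecidableEq V] (X Y X' Y' : Finset V) : Matrix V V ℤ :=
  fun i j =>
    if i = j then 2
    else if i ∈ X ∪ Y ∧ j ∈ X ∪ Y then (if (i ∈ X ↔ j ∈ X) then 1 else -1)
    else if i ∈ X' ∪ Y' ∧ j ∈ X' ∪ Y' then (if (i ∈ X' ↔ j ∈ X') then 1 else -1)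
    else 0

lemma Tsr_apply {V : Type*} [Fintype V] [DecidableEq V] (s r : V) (A : Matrix V V ℤ)
    (hA : A s r = -1) (i j : V) :
    Tsr s r A i j = A i j + (if i = r then A s j else 0) + (if j = r then A i s else 0)
      + (if i = r ∧ j = r then A s s else 0) := by
  simp only [Tsr, Msr, hA, neg_neg, transpose_add, transpose_one,
    Matrix.add_mul, Matrix.mul_add, Matrix.one_mul, Matrix.mul_one, Matrix.add_apply]
  simp [Matrix.mul_apply, Matrix.single, Matrix.of_apply, ite_and, Finset.sum_ite_eq,
    Finset.mul_sum, Finset.sum_mul, transpose_apply, eq_comm]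
  split_ifs <;> ring


set_option maxHeartbeats 1000000 in
theorem stmt8 (V : Type*) [Fintype V] [DecidableEq V]
    (X Y X' Y' : Finset V) (s : V)
    (hcov : X ∪ Y ∪ X' ∪ Y' = Finset.univ)
    (hXX' : X ∩ X' = {s})
    (hXY : X ∩ Y = ∅) (hXY' : X ∩ Y' = ∅)
    (hYX' : Y ∩ X' = ∅) (hYY' : Y ∩ Y' = ∅) (hX'Y' : X' ∩ Y' = ∅)
    (r : V) (hr : r ∈ Y) :
    Tsr s r (glueF X Y X' Y') = glueF X (Y.erase r) (insert r X') Y' := by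
  have hsX : s ∈ X := by
    have : s ∈ X ∩ X' := hXX' ▸ Finset.mem_singleton_self s
    exact (Finset.mem_inter.mp this).1
  have hsX' : s ∈ X' := by
    have : s ∈ X ∩ X' := hXX' ▸ Finset.mem_singleton_self s
    exact (Finset.mem_inter.mp this).2
  have dXY : ∀ v, v ∈ X → v ∈ Y → False := fun v h1 h2 => by
    have := Finset.mem_inter.mpr ⟨h1, h2⟩; rw [hXY] at this; simp at this
  have dXY' : ∀ v, v ∈ X → v ∈ Y' → False := fun v h1 h2 => by
    have := Finset.mem_inter.mpr ⟨h1, h2⟩; rw [hXY'] at this; simp at this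
  have dYX' : ∀ v, v ∈ Y → v ∈ X' → False := fun v h1 h2 => by
    have := Finset.mem_inter.mpr ⟨h1, h2⟩; rw [hYX'] at this; simp at this
  have dYY' : ∀ v, v ∈ Y → v ∈ Y' → False := fun v h1 h2 => by
    have := Finset.mem_inter.mpr ⟨h1, h2⟩; rw [hYY'] at this; simp at this
  have dX'Y' : ∀ v, v ∈ X' → v ∈ Y' → False := fun v h1 h2 => by
    have := Finset.mem_inter.mpr ⟨h1, h2⟩; rw [hX'Y'] at this; simp at this
  have dXX' : ∀ v, v ∈ X → v ∈ X' → v = s := fun v h1 h2 => by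
    have := Finset.mem_inter.mpr ⟨h1, h2⟩; rw [hXX'] at this; simpa using this
  have hcov' : ∀ v : V, v ∈ X ∨ v ∈ Y ∨ v ∈ X' ∨ v ∈ Y' := fun v => by
    have : v ∈ X ∪ Y ∪ X' ∪ Y' := hcov ▸ Finset.mem_univ v
    simpa [Finset.mem_union, or_assoc] using this
  have hsY : s ∉ Y := fun h => dXY s hsX h
  have hsY' : s ∉ Y' := fun h => dXY' s hsX h
  have hrX : r ∉ X := fun h => dXY r h hr
  have hrX' : r ∉ X' := fun h => dYX' r hr h
  have hrY' : r ∉ Y' := fun h => dYY' r hr h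
  have hrs : r ≠ s := fun h => hsY (h ▸ hr)
  have key : ∀ v : V, (v ∈ X ∧ v ∉ Y ∧ v ∈ X' ∧ v ∉ Y' ∧ v = s) ∨
      (v ∈ X ∧ v ∉ Y ∧ v ∉ X' ∧ v ∉ Y' ∧ v ≠ s) ∨
      (v ∈ Y ∧ v ∉ X ∧ v ∉ X' ∧ v ∉ Y' ∧ v ≠ s) ∨
      (v ∈ X' ∧ v ∉ X ∧ v ∉ Y ∧ v ∉ Y' ∧ v ≠ s) ∨
      (v ∈ Y' ∧ v ∉ X ∧ v ∉ Y ∧ v ∉ X' ∧ v ≠ s) := by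
    intro v
    by_cases hv : v = s
    · subst hv; exact Or.inl ⟨hsX, hsY, hsX', hsY', rfl⟩
    rcases hcov' v with h | h | h | h
    · exact Or.inr <| Or.inl ⟨h, fun h2 => dXY v h h2, fun h2 => hv (dXX' v h h2),
        fun h2 => dXY' v h h2, hv⟩
    · exact Or.inr <| Or.inr <| Or.inl ⟨h, fun h2 => dXY v h2 h, fun h2 => dYX' v h h2,
        fun h2 => dYY' v h h2, hv⟩
    · exact Or.inr <| Or.inr <| Or.inr <| Or.inl ⟨h, fun h2 => hv (dXX' v h2 h),
        fun h2 => dYX' v h2 h, fun h2 => dX'Y' v h h2, hv⟩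
    · exact Or.inr <| Or.inr <| Or.inr <| Or.inr ⟨h, fun h2 => dXY' v h2 h,
        fun h2 => dYY' v h2 h, fun h2 => dX'Y' v h2 h, hv⟩
  have hAsr : glueF X Y X' Y' s r = -1 := by
    simp [glueF, hrs.symm, hsX, hr, hrX, Ne.symm hrs]
  ext i j
  rw [Tsr_apply s r _ hAsr]
  have ki := key i
  have kj := key j
  clear hcov hXX' hXY hXY' hYX' hYY' hX'Y' key hcov' dXY dXY' dYX' dYY' dX'Y' dXX' hAsr
  rcases ki with ⟨hi1, hi2, hi3, hi4, hi5⟩ | ⟨hi1, hi2, hi3, hi4, hi5⟩ |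
    ⟨hi1, hi2, hi3, hi4, hi5⟩ | ⟨hi1, hi2, hi3, hi4, hi5⟩ | ⟨hi1, hi2, hi3, hi4, hi5⟩ <;>
  rcases kj with ⟨hj1, hj2, hj3, hj4, hj5⟩ | ⟨hj1, hj2, hj3, hj4, hj5⟩ |
    ⟨hj1, hj2, hj3, hj4, hj5⟩ | ⟨hj1, hj2, hj3, hj4, hj5⟩ | ⟨hj1, hj2, hj3, hj4, hj5⟩ <;>
  by_cases hij : i = j <;> by_cases hir : i = r <;> by_cases hjr : j = r <;>
  simp only [glueF, Finset.mem_union, Finset.mem_insert, Finset.mem_erase] <;>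
  simp_all <;> (try omega) <;> (try (split_ifs <;> simp_all <;> omega)) <;> simp_all [eq_comm]
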